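/- arXiv:2403.12763 — 2 statements merged into one kernel-verified Lean document; each statement's English description precedes it below -/
import Mathlib

section
/- Let α > 1 and σ > 0 be real numbers, let s₂ < 2σ and let s₁ ∈ ℝ. Define a_n = |n|^{−(2σ−s₂)/2} if |n| = 2^k for some k ∈ ℕ, and a_n = 0 otherwise (n ∈ ℤ). Then (a_n) is square-summable, and the quantity S_N = Σ_{n ∈ ℤ, 0 < |n| ≤ 2N} ⟨n⟩^{−2s₂} | Σ_{m ∈ ℤ, |m| ≤ N, |n+m| ≤ N} ⟨n+m⟩^σ ⟨m⟩^σ ⟨ |n+m|^α − |m|^α ⟩^{−s₁} a_{n+m} a_m |² tends to +∞ as N → ∞. -/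
open Real Filter Finset

noncomputable section

/-- The Japanese bracket `⟨x⟩ = (1 + x²)^{1/2}`. -/
def jb (x : ℝ) : ℝ := (1 + x ^ 2) ^ ((1:ℝ)/2)

open Classical in
/-- The lacunary coefficients `a_n = |n|^{−(2σ−s₂)/2}` when `|n|` is a power of
two, `a_n = 0` otherwise. -/
def lacunaryCoeff (σ s₂ : ℝ) (n : ℤ) : ℝ :=
  if ∃ k : ℕ, |n| = 2 ^ k then |(n : ℝ)| ^ (-((2 * σ - s₂) / 2)) else 0

/- ------------------ auxiliary lemmas ------------------ -/

lemma jb_pos (x : ℝ) : 0 < jb x := Real.rpow_pos_of_pos (by positivity) _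

lemma jb_zero : jb 0 = 1 := by simp [jb]

lemma jb_neg (x : ℝ) : jb (-x) = jb x := by simp [jb]

lemma sq_rpow_half {y : ℝ} (hy : 0 ≤ y) : ((y ^ 2 : ℝ)) ^ ((1:ℝ)/2) = y := by
  rw [← Real.rpow_natCast y 2, ← Real.rpow_mul hy]
  norm_num

lemma le_jb {y : ℝ} (hy : 0 ≤ y) : y ≤ jb y := by
  have h := Real.rpow_le_rpow (by positivity) (show y^2 ≤ 1 + y^2 by linarith)
    (by norm_num : (0:ℝ) ≤ 1/2)
  rwa [sq_rpow_half hy] at h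

lemma jb_le {y : ℝ} (hy : 1 ≤ y) : jb y ≤ 2 * y := by
  have h2 : (0:ℝ) ≤ 2 * y := by linarith
  have h := Real.rpow_le_rpow (by positivity)
    (show 1 + y^2 ≤ (2*y)^2 by nlinarith) (by norm_num : (0:ℝ) ≤ 1/2)
  rwa [sq_rpow_half h2] at h

lemma jb_rpow_ge {y : ℝ} (hy : 1 ≤ y) (t : ℝ) :
    y ^ t * (4:ℝ) ^ (-|t|) ≤ jb y ^ t := by
  have hy0 : (0:ℝ) < y := lt_of_lt_of_le one_pos hy
  rcases le_or_gt 0 t with ht | ht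
  · have h1 : (4:ℝ) ^ (-|t|) ≤ 1 :=
      Real.rpow_le_one_of_one_le_of_nonpos (by norm_num) (neg_nonpos.2 (abs_nonneg t))
    have h2 : y ^ t ≤ jb y ^ t := Real.rpow_le_rpow hy0.le (le_jb hy0.le) ht
    have h3 : (0:ℝ) ≤ y ^ t := (Real.rpow_pos_of_pos hy0 t).le
    calc y ^ t * (4:ℝ) ^ (-|t|) ≤ y ^ t * 1 := by
          exact mul_le_mul_of_nonneg_left h1 h3
      _ = y ^ t := mul_one _
      _ ≤ jb y ^ t := h2
  · have habs : -|t| = t := by rw [abs_of_neg ht, neg_neg]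
    have h2 : (2*y) ^ t ≤ jb y ^ t :=
      Real.rpow_le_rpow_of_nonpos (jb_pos y) (jb_le hy) ht.le
    have h4 : (4:ℝ) ^ (-|t|) ≤ (2:ℝ) ^ (-|t|) :=
      Real.rpow_le_rpow_of_nonpos (by norm_num) (by norm_num)
        (neg_nonpos.2 (abs_nonneg t))
    have h3 : (0:ℝ) ≤ y ^ t := (Real.rpow_pos_of_pos hy0 t).le
    calc y ^ t * (4:ℝ) ^ (-|t|) ≤ y ^ t * (2:ℝ) ^ (-|t|) :=
          mul_le_mul_of_nonneg_left h4 h3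
      _ = (2*y) ^ t := by
          rw [habs, Real.mul_rpow (by norm_num) hy0.le]; ring
      _ ≤ jb y ^ t := h2

lemma lac_nonneg (σ s₂ : ℝ) (n : ℤ) : 0 ≤ lacunaryCoeff σ s₂ n := by
  unfold lacunaryCoeff
  split
  · exact Real.rpow_nonneg (abs_nonneg _) _
  · exact le_refl 0

lemma lac_neg (σ s₂ : ℝ) (n : ℤ) :
    lacunaryCoeff σ s₂ (-n) = lacunaryCoeff σ s₂ n := by
  unfold lacunaryCoeff
  by_cases h : ∃ k : ℕ, |n| = 2 ^ k
  · rw [if_pos (by simpa [abs_neg] using h), if_pos h]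
    simp
  · rw [if_neg (by simpa [abs_neg] using h), if_neg h]

lemma lac_pow (σ s₂ : ℝ) (k : ℕ) :
    lacunaryCoeff σ s₂ ((2:ℤ)^k) = ((2:ℝ)^k) ^ (-((2 * σ - s₂) / 2)) := by
  unfold lacunaryCoeff
  rw [if_pos ⟨k, abs_of_nonneg (by positivity)⟩]
  congr 1
  push_cast
  exact abs_of_nonneg (by positivity)

/-- Monotonicity of powers of two in `ℤ`. -/
lemma two_pow_strictMono : StrictMono (fun k : ℕ => (2:ℤ)^k) :=
  fun _ _ h => pow_lt_pow_right₀ (by norm_num) h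

/-- Optimality of the spatial regularity exponent `s₂ = 2σ`: for `s₂ < 2σ`, the
lacunary coefficients are square-summable, yet
`S_N = ‖⟨D_t⟩^{−s₁} f_N(0,·)‖²_{H^{−s₂}}` diverges. -/
theorem optimality_space_regularity
    (α σ s₁ s₂ : ℝ) (hα : 1 < α) (hσ : 0 < σ) (hs₂ : s₂ < 2 * σ) :
    Summable (fun n : ℤ => lacunaryCoeff σ s₂ n ^ 2) ∧
    Tendsto
      (fun N : ℕ =>
        ∑ n ∈ (Finset.Icc (-(2 * (N : ℤ))) (2 * (N : ℤ))).filter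
            (fun n => n ≠ 0),
          jb (n : ℝ) ^ (-(2 * s₂)) *
            (∑ m ∈ (Finset.Icc (-(N : ℤ)) (N : ℤ)).filter
                (fun m => |n + m| ≤ (N : ℤ)),
              jb ((n + m : ℤ) : ℝ) ^ σ * jb ((m : ℤ) : ℝ) ^ σ
                * jb (|((n + m : ℤ) : ℝ)| ^ α - |((m : ℤ) : ℝ)| ^ α) ^ (-s₁)
                * lacunaryCoeff σ s₂ (n + m) * lacunaryCoeff σ s₂ m) ^ 2)
      atTop atTop := by
  have hδ : 0 < 2 * σ - s₂ := by linarith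
  set δ : ℝ := 2 * σ - s₂ with hδdef
  constructor
  · -- Summability of the squared lacunary coefficients
    set f : ℤ → ℝ := fun n => lacunaryCoeff σ s₂ n ^ 2 with hf
    have hpow : ∀ k : ℕ, f ((2:ℤ)^k) = ((2:ℝ) ^ (-δ)) ^ k := by
      intro k
      have hx : (0:ℝ) < (2:ℝ)^k := by positivity
      simp only [f, lac_pow]
      rw [sq, ← Real.rpow_add hx, ← Real.rpow_natCast (2:ℝ) k,
        ← Real.rpow_mul (by norm_num : (0:ℝ) ≤ 2),
        ← Real.rpow_natCast ((2:ℝ) ^ (-δ)) k,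
        ← Real.rpow_mul (by norm_num : (0:ℝ) ≤ 2)]
      congr 1
      ring
    have hgeo : Summable (fun k : ℕ => ((2:ℝ) ^ (-δ)) ^ k) := by
      apply summable_geometric_of_lt_one (Real.rpow_nonneg (by norm_num) _)
      exact Real.rpow_lt_one_of_one_lt_of_neg (by norm_num) (by linarith)
    have hnat : Summable (fun n : ℕ => f (n : ℤ)) := by
      have hinj : Function.Injective (fun k : ℕ => 2 ^ k : ℕ → ℕ) :=
        fun a b h => Nat.pow_right_injective (by norm_num) h
      have hzero : ∀ x : ℕ, x ∉ Set.range (fun k : ℕ => 2 ^ k : ℕ → ℕ) →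
          f (x : ℤ) = 0 := by
        intro x hx
        simp only [f, lacunaryCoeff]
        rw [if_neg, zero_pow (by norm_num)]
        rintro ⟨k, hk⟩
        apply hx
        refine ⟨k, ?_⟩
        have : ((x : ℤ)) = ((2:ℤ))^k := by
          rwa [abs_of_nonneg (by positivity)] at hk
        exact_mod_cast this.symm
      rw [← Function.Injective.summable_iff hinj hzero]
      have : (fun n : ℕ => f (n : ℤ)) ∘ (fun k : ℕ => 2 ^ k) =
          fun k : ℕ => ((2:ℝ) ^ (-δ)) ^ k := by
        funext k
        simp only [Function.comp]
        rw [← hpow k]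
        norm_num
      rw [this]
      exact hgeo
    have hneg : Summable (fun n : ℕ => f (-(n : ℤ))) := by
      have : (fun n : ℕ => f (-(n : ℤ))) = fun n : ℕ => f (n : ℤ) := by
        funext n; simp only [f, lac_neg]
      rw [this]; exact hnat
    exact Summable.of_nat_of_neg hnat hneg
  · -- Divergence of S_N
    set t : ℝ := -(2 * s₂) with ht
    set c : ℝ := (2:ℝ) ^ t * (4:ℝ) ^ (-|t|) with hc
    have hcpos : 0 < c := by
      apply mul_pos <;> exact Real.rpow_pos_of_pos (by norm_num) _
    -- the key per-term lower bound
    have key : ∀ (N : ℕ) (k : ℕ), (2:ℤ)^k ≤ (N:ℤ) →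
        c ≤ jb (((2:ℤ)^(k+1) : ℤ) : ℝ) ^ (-(2 * s₂)) *
          (∑ m ∈ (Finset.Icc (-(N : ℤ)) (N : ℤ)).filter
              (fun m => |(2:ℤ)^(k+1) + m| ≤ (N : ℤ)),
            jb (((2:ℤ)^(k+1) + m : ℤ) : ℝ) ^ σ * jb ((m : ℤ) : ℝ) ^ σ
              * jb (|(((2:ℤ)^(k+1) + m : ℤ) : ℝ)| ^ α - |((m : ℤ) : ℝ)| ^ α) ^ (-s₁)
              * lacunaryCoeff σ s₂ ((2:ℤ)^(k+1) + m) * lacunaryCoeff σ s₂ m) ^ 2 := by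
      intro N k hk
      set x : ℝ := (2:ℝ)^k with hx
      have hxpos : (0:ℝ) < x := by positivity
      have hx1 : (1:ℝ) ≤ x := one_le_pow₀ (by norm_num)
      have hkpos : (0:ℤ) < (2:ℤ)^k := by positivity
      set m₀ : ℤ := -((2:ℤ)^k) with hm₀
      have hsum : (2:ℤ)^(k+1) + m₀ = (2:ℤ)^k := by
        simp only [hm₀, pow_succ]; ring
      have hmem : m₀ ∈ (Finset.Icc (-(N : ℤ)) (N : ℤ)).filter
          (fun m => |(2:ℤ)^(k+1) + m| ≤ (N : ℤ)) := by
        rw [Finset.mem_filter, Finset.mem_Icc]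
        refine ⟨⟨by omega, by omega⟩, ?_⟩
        rw [hsum, abs_of_nonneg hkpos.le]
        exact hk
      -- the individual summand at m₀
      have hnonneg : ∀ m ∈ (Finset.Icc (-(N : ℤ)) (N : ℤ)).filter
          (fun m => |(2:ℤ)^(k+1) + m| ≤ (N : ℤ)),
          0 ≤ jb (((2:ℤ)^(k+1) + m : ℤ) : ℝ) ^ σ * jb ((m : ℤ) : ℝ) ^ σ
              * jb (|(((2:ℤ)^(k+1) + m : ℤ) : ℝ)| ^ α - |((m : ℤ) : ℝ)| ^ α) ^ (-s₁)
              * lacunaryCoeff σ s₂ ((2:ℤ)^(k+1) + m) * lacunaryCoeff σ s₂ m := by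
        intro m _
        have j1 := (jb_pos (((2:ℤ)^(k+1) + m : ℤ) : ℝ))
        apply mul_nonneg
        apply mul_nonneg
        apply mul_nonneg
        apply mul_nonneg
        · exact (Real.rpow_pos_of_pos (jb_pos _) _).le
        · exact (Real.rpow_pos_of_pos (jb_pos _) _).le
        · exact (Real.rpow_pos_of_pos (jb_pos _) _).le
        · exact lac_nonneg _ _ _
        · exact lac_nonneg _ _ _
      have hsingle := Finset.single_le_sum hnonneg hmem
      -- value of the summand at m₀
      have hcastk : (((2:ℤ)^k : ℤ) : ℝ) = x := by push_cast [hx]; ring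
      have hcastm : ((m₀ : ℤ) : ℝ) = -x := by push_cast [hm₀, hx]; ring
      have hval : jb (((2:ℤ)^(k+1) + m₀ : ℤ) : ℝ) ^ σ * jb ((m₀ : ℤ) : ℝ) ^ σ
              * jb (|(((2:ℤ)^(k+1) + m₀ : ℤ) : ℝ)| ^ α - |((m₀ : ℤ) : ℝ)| ^ α) ^ (-s₁)
              * lacunaryCoeff σ s₂ ((2:ℤ)^(k+1) + m₀) * lacunaryCoeff σ s₂ m₀
          = jb x ^ σ * jb x ^ σ * (x ^ (-(δ/2)) * x ^ (-(δ/2))) := by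
        rw [hsum, hcastk, hcastm, jb_neg, abs_neg, abs_of_pos hxpos, sub_self,
          jb_zero, Real.one_rpow, hm₀, lac_neg, lac_pow]
        rw [hδdef, ← hx]
        ring
      have hlow : x ^ s₂ ≤ jb x ^ σ * jb x ^ σ * (x ^ (-(δ/2)) * x ^ (-(δ/2))) := by
        have h1 : x ^ σ * x ^ σ * (x ^ (-(δ/2)) * x ^ (-(δ/2))) = x ^ s₂ := by
          rw [← Real.rpow_add hxpos, ← Real.rpow_add hxpos, ← Real.rpow_add hxpos]
          congr 1
          rw [hδdef]; ring
        rw [← h1]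
        have hjb : x ^ σ ≤ jb x ^ σ := Real.rpow_le_rpow hxpos.le (le_jb hxpos.le) hσ.le
        have hxσ : (0:ℝ) ≤ x ^ σ := (Real.rpow_pos_of_pos hxpos σ).le
        have hxd : (0:ℝ) ≤ x ^ (-(δ/2)) * x ^ (-(δ/2)) :=
          mul_nonneg (Real.rpow_pos_of_pos hxpos _).le (Real.rpow_pos_of_pos hxpos _).le
        apply mul_le_mul_of_nonneg_right _ hxd
        exact mul_le_mul hjb hjb hxσ ((Real.rpow_pos_of_pos (jb_pos x) σ).le)
      have hT : x ^ s₂ ≤ (∑ m ∈ (Finset.Icc (-(N : ℤ)) (N : ℤ)).filter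
              (fun m => |(2:ℤ)^(k+1) + m| ≤ (N : ℤ)),
            jb (((2:ℤ)^(k+1) + m : ℤ) : ℝ) ^ σ * jb ((m : ℤ) : ℝ) ^ σ
              * jb (|(((2:ℤ)^(k+1) + m : ℤ) : ℝ)| ^ α - |((m : ℤ) : ℝ)| ^ α) ^ (-s₁)
              * lacunaryCoeff σ s₂ ((2:ℤ)^(k+1) + m) * lacunaryCoeff σ s₂ m) := by
        calc x ^ s₂ ≤ _ := hlow
          _ = _ := hval.symm
          _ ≤ _ := hsingle
      have hTsq : x ^ (2 * s₂) ≤ (∑ m ∈ (Finset.Icc (-(N : ℤ)) (N : ℤ)).filter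
              (fun m => |(2:ℤ)^(k+1) + m| ≤ (N : ℤ)),
            jb (((2:ℤ)^(k+1) + m : ℤ) : ℝ) ^ σ * jb ((m : ℤ) : ℝ) ^ σ
              * jb (|(((2:ℤ)^(k+1) + m : ℤ) : ℝ)| ^ α - |((m : ℤ) : ℝ)| ^ α) ^ (-s₁)
              * lacunaryCoeff σ s₂ ((2:ℤ)^(k+1) + m) * lacunaryCoeff σ s₂ m) ^ 2 := by
        have h2 : (x ^ s₂) ^ 2 = x ^ (2 * s₂) := by
          rw [sq, ← Real.rpow_add hxpos]; congr 1; ring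
        rw [← h2]
        exact pow_le_pow_left₀ (Real.rpow_pos_of_pos hxpos s₂).le hT 2
      -- the outer weight
      have hcastn : (((2:ℤ)^(k+1) : ℤ) : ℝ) = 2 * x := by
        push_cast [hx, pow_succ]; ring
      have h2x1 : (1:ℝ) ≤ 2 * x := by linarith
      have hwt : (2*x) ^ t * (4:ℝ) ^ (-|t|) ≤ jb (2*x) ^ t := jb_rpow_ge h2x1 t
      have hceq : ((2*x) ^ t * (4:ℝ) ^ (-|t|)) * x ^ (2 * s₂) = c := by
        rw [Real.mul_rpow (by norm_num : (0:ℝ) ≤ 2) hxpos.le]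
        have hxx : x ^ t * x ^ (2 * s₂) = 1 := by
          rw [← Real.rpow_add hxpos, ht]
          norm_num
        calc (2:ℝ) ^ t * x ^ t * (4:ℝ) ^ (-|t|) * x ^ (2 * s₂)
            = (2:ℝ) ^ t * (4:ℝ) ^ (-|t|) * (x ^ t * x ^ (2 * s₂)) := by ring
          _ = c := by rw [hxx, mul_one, hc]
      rw [hcastn]
      calc c = ((2*x) ^ t * (4:ℝ) ^ (-|t|)) * x ^ (2 * s₂) := hceq.symm
        _ ≤ jb (2*x) ^ t * x ^ (2 * s₂) := by
            apply mul_le_mul_of_nonneg_right hwt (Real.rpow_pos_of_pos hxpos _).le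
        _ = jb (2*x) ^ (-(2 * s₂)) * x ^ (2 * s₂) := by rw [ht]
        _ ≤ _ := by
            apply mul_le_mul_of_nonneg_left hTsq
              (Real.rpow_pos_of_pos (jb_pos _) _).le
    -- lower bound S_N ≥ c * (log₂ N + 1)
    have main : ∀ N : ℕ, 1 ≤ N →
        c * ((Nat.log 2 N : ℝ) + 1) ≤
        (∑ n ∈ (Finset.Icc (-(2 * (N : ℤ))) (2 * (N : ℤ))).filter
            (fun n => n ≠ 0),
          jb (n : ℝ) ^ (-(2 * s₂)) *
            (∑ m ∈ (Finset.Icc (-(N : ℤ)) (N : ℤ)).filter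
                (fun m => |n + m| ≤ (N : ℤ)),
              jb ((n + m : ℤ) : ℝ) ^ σ * jb ((m : ℤ) : ℝ) ^ σ
                * jb (|((n + m : ℤ) : ℝ)| ^ α - |((m : ℤ) : ℝ)| ^ α) ^ (-s₁)
                * lacunaryCoeff σ s₂ (n + m) * lacunaryCoeff σ s₂ m) ^ 2) := by
      intro N hN
      set L := Nat.log 2 N with hL
      have hpowle : ∀ k : ℕ, k ≤ L → (2:ℤ)^k ≤ (N:ℤ) := by
        intro k hkL
        have h1 : (2:ℕ)^k ≤ 2^L := Nat.pow_le_pow_right (by norm_num) hkL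
        have h2 : (2:ℕ)^L ≤ N := Nat.pow_log_le_self 2 (by omega)
        exact_mod_cast le_trans h1 h2
      set B : Finset ℤ := (Finset.range (L+1)).image (fun k => (2:ℤ)^(k+1)) with hB
      have hsub : B ⊆ (Finset.Icc (-(2 * (N : ℤ))) (2 * (N : ℤ))).filter
          (fun n => n ≠ 0) := by
        intro n hn
        rw [hB, Finset.mem_image] at hn
        obtain ⟨k, hkmem, rfl⟩ := hn
        rw [Finset.mem_range] at hkmem
        have hk2 : (2:ℤ)^k ≤ (N:ℤ) := hpowle k (by omega)
        have hkpos : (0:ℤ) < (2:ℤ)^k := by positivity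
        rw [Finset.mem_filter, Finset.mem_Icc]
        refine ⟨⟨by rw [pow_succ]; omega, by rw [pow_succ]; omega⟩, ?_⟩
        positivity
      have hsumnn : ∀ n ∈ (Finset.Icc (-(2 * (N : ℤ))) (2 * (N : ℤ))).filter
          (fun n => n ≠ 0), n ∉ B →
          0 ≤ jb (n : ℝ) ^ (-(2 * s₂)) *
            (∑ m ∈ (Finset.Icc (-(N : ℤ)) (N : ℤ)).filter
                (fun m => |n + m| ≤ (N : ℤ)),
              jb ((n + m : ℤ) : ℝ) ^ σ * jb ((m : ℤ) : ℝ) ^ σ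
                * jb (|((n + m : ℤ) : ℝ)| ^ α - |((m : ℤ) : ℝ)| ^ α) ^ (-s₁)
                * lacunaryCoeff σ s₂ (n + m) * lacunaryCoeff σ s₂ m) ^ 2 := by
        intro n _ _
        exact mul_nonneg (Real.rpow_pos_of_pos (jb_pos _) _).le (sq_nonneg _)
      calc c * ((L : ℝ) + 1)
          = ∑ _k ∈ Finset.range (L+1), c := by
            rw [Finset.sum_const, Finset.card_range, nsmul_eq_mul]
            push_cast; ring
        _ ≤ ∑ k ∈ Finset.range (L+1),
              (jb (((2:ℤ)^(k+1) : ℤ) : ℝ) ^ (-(2 * s₂)) *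
              (∑ m ∈ (Finset.Icc (-(N : ℤ)) (N : ℤ)).filter
                  (fun m => |(2:ℤ)^(k+1) + m| ≤ (N : ℤ)),
                jb (((2:ℤ)^(k+1) + m : ℤ) : ℝ) ^ σ * jb ((m : ℤ) : ℝ) ^ σ
                  * jb (|(((2:ℤ)^(k+1) + m : ℤ) : ℝ)| ^ α - |((m : ℤ) : ℝ)| ^ α) ^ (-s₁)
                  * lacunaryCoeff σ s₂ ((2:ℤ)^(k+1) + m) * lacunaryCoeff σ s₂ m) ^ 2) := by
            apply Finset.sum_le_sum
            intro k hkmem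
            rw [Finset.mem_range] at hkmem
            exact key N k (hpowle k (by omega))
        _ = ∑ n ∈ B,
              jb (n : ℝ) ^ (-(2 * s₂)) *
              (∑ m ∈ (Finset.Icc (-(N : ℤ)) (N : ℤ)).filter
                  (fun m => |n + m| ≤ (N : ℤ)),
                jb ((n + m : ℤ) : ℝ) ^ σ * jb ((m : ℤ) : ℝ) ^ σ
                  * jb (|((n + m : ℤ) : ℝ)| ^ α - |((m : ℤ) : ℝ)| ^ α) ^ (-s₁)
                  * lacunaryCoeff σ s₂ (n + m) * lacunaryCoeff σ s₂ m) ^ 2 := by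
            rw [hB, Finset.sum_image]
            intro a _ b _ hab
            have := pow_right_injective₀ (by norm_num : (1:ℤ) ≤ 2)
              (by norm_num : (2:ℤ) ≠ 1) hab
            omega
        _ ≤ _ := Finset.sum_le_sum_of_subset_of_nonneg hsub hsumnn
    -- conclude via monotone comparison with c * (log₂ N + 1) → ∞
    have hlog : Tendsto (fun N : ℕ => Nat.log 2 N) atTop atTop := by
      apply tendsto_atTop_atTop.mpr
      intro b
      refine ⟨2^b, fun a ha => ?_⟩
      have ha0 : a ≠ 0 := by
        have : (1:ℕ) ≤ 2^b := Nat.one_le_two_pow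
        omega
      exact (Nat.le_log_iff_pow_le (by norm_num) ha0).mpr ha
    have hlogR : Tendsto (fun N : ℕ => ((Nat.log 2 N : ℝ) + 1)) atTop atTop := by
      apply tendsto_atTop_add_const_right
      exact tendsto_natCast_atTop_atTop.comp hlog
    have hfin : Tendsto (fun N : ℕ => c * ((Nat.log 2 N : ℝ) + 1)) atTop atTop :=
      hlogR.const_mul_atTop hcpos
    apply tendsto_atTop_mono' atTop _ hfin
    filter_upwards [eventually_ge_atTop 1] with N hN
    exact main N hN

end
end

section
/- Let α > 1 and σ > 0 be real numbers, set s₁ = 2σ/(α−1), and let s₂ be a real number with 2(s₁ + s₂) ≤ 1. Define a_n = 0 for n ≤ 0, a_1 = 1, and a_n = n^{−1/2} (log n)^{−3/4} for n ≥ 2. Then (a_n) is square-summable, and the quantity S_N = Σ_{n ∈ ℤ, 0 < |n| ≤ 2N} ⟨n⟩^{−2s₂} | Σ_{m ∈ ℤ, |m| ≤ N, |n+m| ≤ N} ⟨n+m⟩^σ ⟨m⟩^σ ⟨ |n+m|^α − |m|^α ⟩^{−s₁} a_{n+m} a_m |² tends to +∞ as N → ∞. -/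
open Real Filter Finset

noncomputable section

/-- The coefficients `a_n = 0` for `n ≤ 0`, `a_1 = 1`, and
`a_n = n^{−1/2} (log n)^{−3/4}` for `n ≥ 2`. -/
def logCoeff (n : ℤ) : ℝ :=
  if n ≤ 0 then 0
  else if n = 1 then 1
  else (n : ℝ) ^ (-(1:ℝ)/2) * Real.log (n : ℝ) ^ (-(3:ℝ)/4)


lemma le_jb_s15 {x : ℝ} (hx : 0 ≤ x) : x ≤ jb x := by
  have : x = (x ^ 2) ^ ((1:ℝ)/2) := by
    rw [← Real.rpow_natCast x 2, ← Real.rpow_mul hx]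
    norm_num
  rw [this]
  exact Real.rpow_le_rpow (by positivity) (by nlinarith) (by norm_num)

lemma jb_le_s15 {x : ℝ} (hx : 0 ≤ x) : jb x ≤ 1 + x := by
  have h1 : (0:ℝ) ≤ 1 + x := by linarith
  have : (1 + x) = ((1+x) ^ 2) ^ ((1:ℝ)/2) := by
    rw [← Real.rpow_natCast (1+x) 2, ← Real.rpow_mul h1]
    norm_num
  rw [this]
  exact Real.rpow_le_rpow (by positivity) (by nlinarith) (by norm_num)

lemma jb_le_two_mul {x : ℝ} (hx : 1 ≤ x) : jb x ≤ 2 * x := by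
  calc jb x ≤ 1 + x := jb_le_s15 (by linarith)
  _ ≤ 2 * x := by linarith

lemma logCoeff_nonneg (n : ℤ) : 0 ≤ logCoeff n := by
  unfold logCoeff
  split_ifs with h1 h2
  · exact le_refl 0
  · norm_num
  · have hn : (1:ℝ) ≤ (n:ℝ) := by exact_mod_cast (by omega : (1:ℤ) ≤ n)
    exact mul_nonneg (Real.rpow_nonneg (by linarith) _)
      (Real.rpow_nonneg (Real.log_nonneg hn) _)

lemma logCoeff_eq {n : ℤ} (hn : 2 ≤ n) :
    logCoeff n = (n : ℝ) ^ (-(1:ℝ)/2) * Real.log (n : ℝ) ^ (-(3:ℝ)/4) := by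
  unfold logCoeff
  rw [if_neg (by omega), if_neg (by omega)]

lemma aux_mono {q a b : ℝ} (hq : q ≤ 0) (ha : 2 ≤ a) (hab : a ≤ b) :
    b⁻¹ * Real.log b ^ q ≤ a⁻¹ * Real.log a ^ q := by
  have ha0 : (0:ℝ) < a := by linarith
  have hla : 0 < Real.log a := Real.log_pos (by linarith)
  have hlab : Real.log a ≤ Real.log b := Real.log_le_log ha0 hab
  have h1 : b⁻¹ ≤ a⁻¹ := by
    apply inv_anti₀ ha0 hab
  have h2 : Real.log b ^ q ≤ Real.log a ^ q :=
    Real.rpow_le_rpow_of_nonpos hla hlab hq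
  exact mul_le_mul h1 h2 (Real.rpow_nonneg (by linarith) _) (by positivity)

lemma hasDerivAt_log_rpow (p : ℝ) {x : ℝ} (hx : 2 ≤ x) :
    HasDerivAt (fun y => Real.log y ^ p) (p * Real.log x ^ (p - 1) * x⁻¹) x := by
  have hx0 : x ≠ 0 := by positivity
  have hlx : Real.log x ≠ 0 := ne_of_gt (Real.log_pos (by linarith))
  have h := (Real.hasDerivAt_rpow_const (p := p) (Or.inl hlx)).comp x (Real.hasDerivAt_log hx0)
  simpa [Function.comp_def, mul_comm, mul_assoc] using h

lemma mvt_log_rpow (p : ℝ) {m : ℝ} (hm : 2 ≤ m) :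
    ∃ ξ, m < ξ ∧ ξ < m + 1 ∧
      Real.log (m+1) ^ p - Real.log m ^ p = p * Real.log ξ ^ (p - 1) * ξ⁻¹ := by
  have hlt : m < m + 1 := by linarith
  obtain ⟨c, hc, hceq⟩ := exists_hasDerivAt_eq_slope (fun y => Real.log y ^ p)
    (fun x => p * Real.log x ^ (p - 1) * x⁻¹) hlt
    (fun x hx => (hasDerivAt_log_rpow p (by
        rcases hx with ⟨h1, _⟩; linarith)).continuousAt.continuousWithinAt)
    (fun x hx => hasDerivAt_log_rpow p (by rcases hx with ⟨h1, _⟩; linarith))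
  refine ⟨c, hc.1, hc.2, ?_⟩
  rw [hceq]
  simp

lemma step_upper {m : ℝ} (hm : 2 ≤ m) :
    2 * Real.log m ^ (-(1:ℝ)/2) - 2 * Real.log (m+1) ^ (-(1:ℝ)/2)
      ≤ m⁻¹ * Real.log m ^ (-(3:ℝ)/2) := by
  obtain ⟨ξ, hξ1, hξ2, heq⟩ := mvt_log_rpow (-(1:ℝ)/2) hm
  have h2ξ : 2 ≤ ξ := by linarith
  have key : 2 * Real.log m ^ (-(1:ℝ)/2) - 2 * Real.log (m+1) ^ (-(1:ℝ)/2)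
      = ξ⁻¹ * Real.log ξ ^ (-(3:ℝ)/2) := by
    have : Real.log (m+1) ^ (-(1:ℝ)/2) - Real.log m ^ (-(1:ℝ)/2)
        = (-(1:ℝ)/2) * Real.log ξ ^ (-(1:ℝ)/2 - 1) * ξ⁻¹ := heq
    have h32 : (-(1:ℝ)/2 - 1) = (-(3:ℝ)/2) := by norm_num
    rw [h32] at this
    nlinarith [this]
  rw [key]
  exact aux_mono (by norm_num) hm hξ1.le

lemma step_lower {m : ℝ} (hm : 2 ≤ m) :
    (m+1)⁻¹ * Real.log (m+1) ^ (-(3:ℝ)/2)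
      ≤ 2 * Real.log m ^ (-(1:ℝ)/2) - 2 * Real.log (m+1) ^ (-(1:ℝ)/2) := by
  obtain ⟨ξ, hξ1, hξ2, heq⟩ := mvt_log_rpow (-(1:ℝ)/2) hm
  have h2ξ : 2 ≤ ξ := by linarith
  have key : 2 * Real.log m ^ (-(1:ℝ)/2) - 2 * Real.log (m+1) ^ (-(1:ℝ)/2)
      = ξ⁻¹ * Real.log ξ ^ (-(3:ℝ)/2) := by
    have : Real.log (m+1) ^ (-(1:ℝ)/2) - Real.log m ^ (-(1:ℝ)/2)
        = (-(1:ℝ)/2) * Real.log ξ ^ (-(1:ℝ)/2 - 1) * ξ⁻¹ := heq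
    have h32 : (-(1:ℝ)/2 - 1) = (-(3:ℝ)/2) := by norm_num
    rw [h32] at this
    nlinarith [this]
  rw [key]
  exact aux_mono (by norm_num) h2ξ hξ2.le

lemma hasDerivAt_loglog {x : ℝ} (hx : 2 ≤ x) :
    HasDerivAt (fun y => Real.log (Real.log y)) ((Real.log x)⁻¹ * x⁻¹) x := by
  have hx0 : x ≠ 0 := by positivity
  have hlx : Real.log x ≠ 0 := ne_of_gt (Real.log_pos (by linarith))
  exact (Real.hasDerivAt_log hlx).comp x (Real.hasDerivAt_log hx0)

lemma step_loglog {n : ℝ} (hn : 2 ≤ n) :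
    Real.log (Real.log (n+1)) - Real.log (Real.log n) ≤ n⁻¹ * (Real.log n)⁻¹ := by
  have hlt : n < n + 1 := by linarith
  obtain ⟨c, hc, hceq⟩ := exists_hasDerivAt_eq_slope (fun y => Real.log (Real.log y))
    (fun x => (Real.log x)⁻¹ * x⁻¹) hlt
    (fun x hx => (hasDerivAt_loglog (by rcases hx with ⟨h1, _⟩; linarith)).continuousAt.continuousWithinAt)
    (fun x hx => hasDerivAt_loglog (by rcases hx with ⟨h1, _⟩; linarith))
  have h2c : 2 ≤ c := by linarith [hc.1]
  have key : Real.log (Real.log (n+1)) - Real.log (Real.log n) = (Real.log c)⁻¹ * c⁻¹ := by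
    have := hceq
    simp at this
    linarith [this]
  rw [key]
  have := aux_mono (q := (-1:ℝ)) (by norm_num) hn hc.1.le
  rw [Real.rpow_neg_one, Real.rpow_neg_one] at this
  linarith [this]

lemma sum_Ico_telescope (φ : ℕ → ℝ) {a b : ℕ} (h : a ≤ b) :
    ∑ m ∈ Finset.Ico a b, (φ m - φ (m+1)) = φ a - φ b := by
  rw [Finset.sum_Ico_eq_sub _ h, Finset.sum_range_sub' φ, Finset.sum_range_sub' φ]
  ring

lemma four_rpow : (4:ℝ) ^ (-(1:ℝ)/2) = 1/2 := by
  have : (4:ℝ) = (2:ℝ) ^ (2:ℝ) := by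
    rw [show (2:ℝ) = ((2:ℕ):ℝ) by norm_num, Real.rpow_natCast]; norm_num
  rw [this, ← Real.rpow_mul (by norm_num)]
  norm_num [Real.rpow_neg_one]

lemma inner_tail {n : ℕ} (hn : 2 ≤ n) :
    Real.log n ^ (-(1:ℝ)/2)
      ≤ ∑ m ∈ Finset.Ico n (n^4), ((m:ℝ)⁻¹ * Real.log m ^ (-(3:ℝ)/2)) := by
  set φ : ℕ → ℝ := fun m => 2 * Real.log (m:ℝ) ^ (-(1:ℝ)/2) with hφ
  have hab : n ≤ n^4 := Nat.le_self_pow (by norm_num) n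
  have h1 : ∑ m ∈ Finset.Ico n (n^4), (φ m - φ (m+1))
      ≤ ∑ m ∈ Finset.Ico n (n^4), ((m:ℝ)⁻¹ * Real.log m ^ (-(3:ℝ)/2)) := by
    apply Finset.sum_le_sum
    intro m hm
    rw [Finset.mem_Ico] at hm
    have hm2 : (2:ℝ) ≤ (m:ℝ) := by exact_mod_cast hn.trans hm.1
    have := step_upper hm2
    simp only [hφ]
    push_cast
    convert this using 3 <;> push_cast <;> ring
  have h2 : ∑ m ∈ Finset.Ico n (n^4), (φ m - φ (m+1)) = φ n - φ (n^4) :=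
    sum_Ico_telescope φ hab
  have h3 : φ (n^4) = Real.log n ^ (-(1:ℝ)/2) := by
    simp only [hφ]
    have : ((n^4 : ℕ) : ℝ) = (n:ℝ)^(4:ℕ) := by push_cast; ring
    rw [this, Real.log_pow]
    have hlog : (0:ℝ) ≤ Real.log n := Real.log_nonneg (by exact_mod_cast hn.trans' (by norm_num))
    rw [show ((4:ℕ):ℝ) = (4:ℝ) by norm_num, Real.mul_rpow (by norm_num) hlog, four_rpow]
    ring
  rw [h2, h3] at h1
  have : φ n - Real.log n ^ (-(1:ℝ)/2) = Real.log n ^ (-(1:ℝ)/2) := by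
    simp only [hφ]; ring
  linarith [h1, this]

lemma outer_tail {K : ℕ} (hK : 2 ≤ K) :
    Real.log (Real.log K) - Real.log (Real.log 2)
      ≤ ∑ n ∈ Finset.Ico 2 K, ((n:ℝ)⁻¹ * (Real.log n)⁻¹) := by
  set ψ : ℕ → ℝ := fun n => Real.log (Real.log (n:ℝ)) with hψ
  have h1 : ∑ n ∈ Finset.Ico 2 K, ((-ψ) n - (-ψ) (n+1))
      ≤ ∑ n ∈ Finset.Ico 2 K, ((n:ℝ)⁻¹ * (Real.log n)⁻¹) := by
    apply Finset.sum_le_sum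
    intro n hn
    rw [Finset.mem_Ico] at hn
    have hn2 : (2:ℝ) ≤ (n:ℝ) := by exact_mod_cast hn.1
    have := step_loglog hn2
    simp only [hψ, Pi.neg_apply]
    push_cast
    have hc : ((n:ℝ) + 1) = ((n+1:ℕ):ℝ) := by push_cast; ring
    nlinarith [this]
  have h2 : ∑ n ∈ Finset.Ico 2 K, ((-ψ) n - (-ψ) (n+1)) = ψ K - ψ 2 := by
    rw [sum_Ico_telescope (-ψ) hK]
    simp only [Pi.neg_apply]
    ring
  rw [h2] at h1
  simpa [hψ] using h1

lemma sq_logCoeff {m : ℕ} (hm : 2 ≤ m) :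
    logCoeff (m:ℤ) ^ 2 = ((m:ℝ))⁻¹ * Real.log (m:ℝ) ^ (-(3:ℝ)/2) := by
  have h2 : (2:ℤ) ≤ (m:ℤ) := by exact_mod_cast hm
  rw [logCoeff_eq h2]
  have hm0 : (0:ℝ) < (m:ℝ) := by exact_mod_cast (by omega : 0 < m)
  have hL : (0:ℝ) < Real.log (m:ℝ) := Real.log_pos (by exact_mod_cast (by omega : 1 < m))
  push_cast
  rw [mul_pow, sq, sq, ← Real.rpow_add hm0, ← Real.rpow_add hL]
  norm_num
  rw [show (-(1:ℝ)) = ((-1:ℝ)) by norm_num, Real.rpow_neg_one]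
  norm_num

set_option maxHeartbeats 1000000 in
lemma summable_sq : Summable (fun n : ℤ => logCoeff n ^ 2) := by
  have hnat : Summable (fun k : ℕ => logCoeff (k:ℤ) ^ 2) := by
    rw [← summable_nat_add_iff 3]
    set φ : ℕ → ℝ := fun k => 2 * Real.log ((k:ℝ)+2) ^ (-(1:ℝ)/2) with hφ
    apply summable_of_sum_range_le (c := φ 0)
    · intro k; exact sq_nonneg _
    · intro n
      have hstep : ∀ k : ℕ, logCoeff ((k+3 : ℕ) : ℤ) ^ 2 ≤ φ k - φ (k+1) := by
        intro k
        have h2 : (2:ℝ) ≤ (k:ℝ)+2 := by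
          have : (0:ℝ) ≤ (k:ℝ) := Nat.cast_nonneg k
          linarith
        have := step_lower h2
        rw [sq_logCoeff (by omega)]
        simp only [hφ]
        push_cast
        have e1 : (k:ℝ)+2+1 = (k:ℝ)+3 := by ring
        have e2 : (k:ℝ)+1+2 = (k:ℝ)+3 := by ring
        rw [e1] at this
        rw [e2]
        linarith [this]
      calc ∑ i ∈ Finset.range n, logCoeff ((i+3 : ℕ) : ℤ) ^ 2
          ≤ ∑ i ∈ Finset.range n, (φ i - φ (i+1)) := Finset.sum_le_sum fun i _ => hstep i
        _ = φ 0 - φ n := Finset.sum_range_sub' φ n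
        _ ≤ φ 0 := by
            have hl : (0:ℝ) ≤ Real.log ((n:ℝ)+2) :=
              Real.log_nonneg (by have : (0:ℝ) ≤ (n:ℝ) := Nat.cast_nonneg n; linarith)
            have h2 : (0:ℝ) ≤ Real.log ((n:ℝ)+2) ^ (-(1:ℝ)/2) := Real.rpow_nonneg hl _
            simp only [hφ]
            linarith
  have hneg : Summable (fun k : ℕ => logCoeff (-(k:ℤ)) ^ 2) := by
    have : (fun k : ℕ => logCoeff (-(k:ℤ)) ^ 2) = fun _ => (0:ℝ) := by
      funext k
      have : logCoeff (-(k:ℤ)) = 0 := by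
        unfold logCoeff
        rw [if_pos (by omega)]
      rw [this]; norm_num
    rw [this]
    exact summable_zero
  exact Summable.of_nat_of_neg hnat hneg

lemma rpow_gap {α a b : ℝ} (hα : 1 < α) (hb : 1 ≤ b) (hab : b ≤ a) :
    a ^ α - b ^ α ≤ α * a ^ (α - 1) * (a - b) := by
  rcases eq_or_lt_of_le hab with rfl | hlt
  · simp
  · have hD : ∀ x ∈ Set.Ioo b a, HasDerivAt (fun y : ℝ => y ^ α) (α * x ^ (α - 1)) x := by
      intro x hx
      have hx0 : x ≠ 0 := by rcases hx with ⟨h1, _⟩; intro h; rw [h] at h1; linarith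
      exact Real.hasDerivAt_rpow_const (x := x) (p := α) (Or.inl hx0)
    obtain ⟨c, hc, hceq⟩ := exists_hasDerivAt_eq_slope (fun y : ℝ => y ^ α)
      (fun x => α * x ^ (α - 1)) hlt
      (fun x hx => by
        have hx0 : x ≠ 0 := by rcases hx with ⟨h1, _⟩; intro h; rw [h] at h1; linarith
        exact ((Real.hasDerivAt_rpow_const (x := x) (p := α) (Or.inl hx0)).continuousAt).continuousWithinAt)
      hD
    have hc0 : 0 ≤ c := by rcases hc with ⟨h1, _⟩; linarith
    have hca : c ≤ a := hc.2.le
    have hslope : a ^ α - b ^ α = α * c ^ (α - 1) * (a - b) := by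
      rw [eq_div_iff (by intro h; rw [sub_eq_zero] at h; rw [h] at hlt; exact lt_irrefl _ hlt)] at hceq
      linarith [hceq]
    rw [hslope]
    have h1 : c ^ (α - 1) ≤ a ^ (α - 1) := Real.rpow_le_rpow hc0 hca (by linarith)
    have hα0 : (0:ℝ) < α := by linarith
    exact mul_le_mul_of_nonneg_right
      (mul_le_mul_of_nonneg_left h1 hα0.le) (sub_nonneg.mpr hab)

set_option maxHeartbeats 1600000 in
lemma T_lb (α σ s₁ : ℝ) (hα : 1 < α) (hσ : 0 < σ) (hs₁ : s₁ = 2 * σ / (α - 1))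
    {n m : ℤ} (hn : 2 ≤ n) (hnm : n ≤ m) :
    ((1 + α * 2 ^ (α-1)) ^ (-s₁) * 2 ^ (-(5:ℝ)/4)) * (n:ℝ) ^ (-s₁)
        * (((m:ℝ))⁻¹ * Real.log (m:ℝ) ^ (-(3:ℝ)/2))
      ≤ jb ((n + m : ℤ) : ℝ) ^ σ * jb ((m : ℤ) : ℝ) ^ σ
          * jb (|((n + m : ℤ) : ℝ)| ^ α - |((m : ℤ) : ℝ)| ^ α) ^ (-s₁)
          * logCoeff (n + m) * logCoeff m := by
  have hα1 : (0:ℝ) < α - 1 := by linarith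
  have hs1pos : 0 < s₁ := by rw [hs₁]; positivity
  have h2σ : (α - 1) * s₁ = 2 * σ := by rw [hs₁]; field_simp
  set x : ℝ := (n:ℝ) with hx
  set y : ℝ := (m:ℝ) with hy
  have hx2 : (2:ℝ) ≤ x := by rw [hx]; exact_mod_cast hn
  have hxy : x ≤ y := by rw [hx, hy]; exact_mod_cast hnm
  have hy2 : (2:ℝ) ≤ y := le_trans hx2 hxy
  have hx0 : (0:ℝ) < x := by linarith
  have hy0 : (0:ℝ) < y := by linarith
  have hLy : (0:ℝ) < Real.log y := Real.log_pos (by linarith)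
  have hcast : ((n + m : ℤ) : ℝ) = x + y := by push_cast; ring
  have habs1 : |((n + m : ℤ) : ℝ)| = x + y := by rw [hcast]; exact abs_of_nonneg (by linarith)
  have habs2 : |((m : ℤ) : ℝ)| = y := abs_of_nonneg (by linarith)
  set C₂ : ℝ := 1 + α * 2 ^ (α-1) with hC₂
  have hC₂0 : 0 < C₂ := by positivity
  -- F1, F2
  have hjb1 : x + y ≤ jb (x + y) := le_jb_s15 (by linarith)
  have hjb2 : y ≤ jb y := le_jb_s15 (by linarith)
  have F1 : y ^ σ ≤ jb ((n + m : ℤ) : ℝ) ^ σ := by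
    rw [hcast]
    exact Real.rpow_le_rpow (by linarith) (by linarith) hσ.le
  have F2 : y ^ σ ≤ jb ((m : ℤ) : ℝ) ^ σ := Real.rpow_le_rpow (by linarith) hjb2 hσ.le
  -- F3 : gap bound
  have hyα1 : (1:ℝ) ≤ y ^ (α - 1) := Real.one_le_rpow (by linarith) (by linarith)
  have hX1 : (1:ℝ) ≤ x * y ^ (α - 1) := by nlinarith
  have F3 : (C₂ * (x * y ^ (α - 1))) ^ (-s₁)
      ≤ jb (|((n + m : ℤ) : ℝ)| ^ α - |((m : ℤ) : ℝ)| ^ α) ^ (-s₁) := by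
    rw [habs1, habs2]
    set gap : ℝ := (x + y) ^ α - y ^ α with hgap
    have hgap0 : 0 ≤ gap := by
      have := Real.rpow_le_rpow (by linarith : (0:ℝ) ≤ y) (by linarith : y ≤ x + y) (by linarith : (0:ℝ) ≤ α)
      simp only [hgap]; linarith
    have hgap1 : gap ≤ α * (x + y) ^ (α - 1) * x := by
      have := rpow_gap hα (by linarith : (1:ℝ) ≤ y) (by linarith : y ≤ x + y)
      simp only [hgap]; linarith
    have hgap2 : (x + y) ^ (α - 1) ≤ 2 ^ (α - 1) * y ^ (α - 1) := by
      have h2y : x + y ≤ 2 * y := by linarith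
      calc (x + y) ^ (α - 1) ≤ (2 * y) ^ (α - 1) :=
            Real.rpow_le_rpow (by linarith) h2y (by linarith)
        _ = 2 ^ (α - 1) * y ^ (α - 1) := Real.mul_rpow (by norm_num) (by linarith)
    have hkey : jb gap ≤ C₂ * (x * y ^ (α - 1)) := by
      have h1 : jb gap ≤ 1 + gap := jb_le_s15 hgap0
      have h2 : gap ≤ α * 2 ^ (α - 1) * (x * y ^ (α - 1)) := by
        have hα0 : (0:ℝ) < α := by linarith
        calc gap ≤ α * (x + y) ^ (α - 1) * x := hgap1
          _ ≤ α * (2 ^ (α - 1) * y ^ (α - 1)) * x := by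
              apply mul_le_mul_of_nonneg_right _ hx0.le
              exact mul_le_mul_of_nonneg_left hgap2 hα0.le
          _ = α * 2 ^ (α - 1) * (x * y ^ (α - 1)) := by ring
      have h3 : (1:ℝ) + α * 2 ^ (α - 1) * (x * y ^ (α - 1)) ≤ C₂ * (x * y ^ (α - 1)) := by
        rw [hC₂]
        nlinarith [hX1]
      linarith
    exact Real.rpow_le_rpow_of_nonpos (jb_pos gap) hkey (by linarith)
  -- F4, F5 : logCoeff bounds
  have F5 : logCoeff m = y ^ (-(1:ℝ)/2) * Real.log y ^ (-(3:ℝ)/4) := logCoeff_eq (by omega)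
  have F4 : 2 ^ (-(5:ℝ)/4) * (y ^ (-(1:ℝ)/2) * Real.log y ^ (-(3:ℝ)/4)) ≤ logCoeff (n + m) := by
    rw [logCoeff_eq (by omega : 2 ≤ n + m), hcast]
    have hxy0 : (0:ℝ) < x + y := by linarith
    have h2y : x + y ≤ 2 * y := by linarith
    have hA : ((2:ℝ) * y) ^ (-(1:ℝ)/2) ≤ (x + y) ^ (-(1:ℝ)/2) :=
      Real.rpow_le_rpow_of_nonpos hxy0 h2y (by norm_num)
    have hA' : ((2:ℝ) * y) ^ (-(1:ℝ)/2) = 2 ^ (-(1:ℝ)/2) * y ^ (-(1:ℝ)/2) :=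
      Real.mul_rpow (by norm_num) (by linarith)
    have hlog1 : (0:ℝ) < Real.log (x + y) := Real.log_pos (by linarith)
    have hlogle : Real.log (x + y) ≤ Real.log (y ^ (2:ℕ)) := by
      apply Real.log_le_log hxy0
      have : (y:ℝ) ^ (2:ℕ) = y * y := sq y
      nlinarith
    have hlogsq : Real.log (y ^ (2:ℕ)) = 2 * Real.log y := by
      rw [Real.log_pow]; norm_num
    have hB : ((2:ℝ) * Real.log y) ^ (-(3:ℝ)/4) ≤ Real.log (x + y) ^ (-(3:ℝ)/4) := by
      apply Real.rpow_le_rpow_of_nonpos hlog1 _ (by norm_num)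
      rw [← hlogsq]; exact hlogle
    have hB' : ((2:ℝ) * Real.log y) ^ (-(3:ℝ)/4) = 2 ^ (-(3:ℝ)/4) * Real.log y ^ (-(3:ℝ)/4) :=
      Real.mul_rpow (by norm_num) hLy.le
    have h2c : (2:ℝ) ^ (-(5:ℝ)/4) = 2 ^ (-(1:ℝ)/2) * 2 ^ (-(3:ℝ)/4) := by
      rw [← Real.rpow_add (by norm_num)]; norm_num
    calc 2 ^ (-(5:ℝ)/4) * (y ^ (-(1:ℝ)/2) * Real.log y ^ (-(3:ℝ)/4))
        = (2 ^ (-(1:ℝ)/2) * y ^ (-(1:ℝ)/2)) * (2 ^ (-(3:ℝ)/4) * Real.log y ^ (-(3:ℝ)/4)) := by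
          rw [h2c]; ring
      _ = ((2:ℝ) * y) ^ (-(1:ℝ)/2) * ((2:ℝ) * Real.log y) ^ (-(3:ℝ)/4) := by rw [hA', hB']
      _ ≤ (x + y) ^ (-(1:ℝ)/2) * Real.log (x + y) ^ (-(3:ℝ)/4) := by
          apply mul_le_mul hA hB (Real.rpow_nonneg (by positivity) _)
            (Real.rpow_nonneg hxy0.le _)
  -- assemble
  have hP : (y ^ σ) * (y ^ σ) * ((C₂ * (x * y ^ (α - 1))) ^ (-s₁))
        * (2 ^ (-(5:ℝ)/4) * (y ^ (-(1:ℝ)/2) * Real.log y ^ (-(3:ℝ)/4)))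
        * (y ^ (-(1:ℝ)/2) * Real.log y ^ (-(3:ℝ)/4))
      ≤ jb ((n + m : ℤ) : ℝ) ^ σ * jb ((m : ℤ) : ℝ) ^ σ
          * jb (|((n + m : ℤ) : ℝ)| ^ α - |((m : ℤ) : ℝ)| ^ α) ^ (-s₁)
          * logCoeff (n + m) * logCoeff m := by
    rw [F5]
    have n1 : (0:ℝ) ≤ y ^ σ := Real.rpow_nonneg hy0.le _
    have n3 : (0:ℝ) ≤ (C₂ * (x * y ^ (α - 1))) ^ (-s₁) := Real.rpow_nonneg (by positivity) _
    have n4 : (0:ℝ) ≤ 2 ^ (-(5:ℝ)/4) * (y ^ (-(1:ℝ)/2) * Real.log y ^ (-(3:ℝ)/4)) := by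
      have := Real.rpow_nonneg hLy.le (-(3:ℝ)/4)
      positivity
    have n5 : (0:ℝ) ≤ y ^ (-(1:ℝ)/2) * Real.log y ^ (-(3:ℝ)/4) :=
      mul_nonneg (Real.rpow_nonneg hy0.le _) (Real.rpow_nonneg hLy.le _)
    have p1 : (0:ℝ) ≤ jb ((n + m : ℤ) : ℝ) ^ σ := Real.rpow_nonneg (jb_pos _).le _
    have p2 : (0:ℝ) ≤ jb ((m : ℤ) : ℝ) ^ σ := Real.rpow_nonneg (jb_pos _).le _
    have p3 : (0:ℝ) ≤ jb (|((n + m : ℤ) : ℝ)| ^ α - |((m : ℤ) : ℝ)| ^ α) ^ (-s₁) :=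
      Real.rpow_nonneg (jb_pos _).le _
    have p4 : (0:ℝ) ≤ logCoeff (n + m) := logCoeff_nonneg _
    apply mul_le_mul _ le_rfl n5 _
    · apply mul_le_mul _ F4 n4 _
      · exact mul_le_mul (mul_le_mul F1 F2 n1 p1) F3 n3 (mul_nonneg p1 p2)
      · exact mul_nonneg (mul_nonneg p1 p2) p3
    · exact mul_nonneg (mul_nonneg (mul_nonneg p1 p2) p3) p4
  refine le_trans (le_of_eq ?_) hP
  -- algebraic identity
  have e0 : (C₂ * (x * y ^ (α - 1))) ^ (-s₁)
      = C₂ ^ (-s₁) * (x ^ (-s₁) * y ^ ((α-1) * (-s₁))) := by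
    rw [Real.mul_rpow hC₂0.le (by positivity), Real.mul_rpow hx0.le (by positivity),
      ← Real.rpow_mul hy0.le]
  rw [e0]
  have e1 : y ^ σ * y ^ σ * y ^ ((α-1) * (-s₁)) = 1 := by
    rw [← Real.rpow_add hy0, ← Real.rpow_add hy0,
      show σ + σ + (α-1) * (-s₁) = 2*σ - (α-1)*s₁ by ring, h2σ]
    norm_num
  have e2 : y ^ (-(1:ℝ)/2) * y ^ (-(1:ℝ)/2) = y⁻¹ := by
    rw [← Real.rpow_add hy0, show -(1:ℝ)/2 + -(1:ℝ)/2 = (-1:ℝ) by ring, Real.rpow_neg_one]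
  have e3 : Real.log y ^ (-(3:ℝ)/4) * Real.log y ^ (-(3:ℝ)/4) = Real.log y ^ (-(3:ℝ)/2) := by
    rw [← Real.rpow_add hLy, show -(3:ℝ)/4 + -(3:ℝ)/4 = -(3:ℝ)/2 by ring]
  have erhs : y ^ σ * y ^ σ * (C₂ ^ (-s₁) * (x ^ (-s₁) * y ^ ((α-1) * (-s₁))))
        * (2 ^ (-(5:ℝ)/4) * (y ^ (-(1:ℝ)/2) * Real.log y ^ (-(3:ℝ)/4)))
        * (y ^ (-(1:ℝ)/2) * Real.log y ^ (-(3:ℝ)/4))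
      = (y ^ σ * y ^ σ * y ^ ((α-1) * (-s₁))) * ((C₂ ^ (-s₁) * 2 ^ (-(5:ℝ)/4)) * x ^ (-s₁))
        * ((y ^ (-(1:ℝ)/2) * y ^ (-(1:ℝ)/2)) * (Real.log y ^ (-(3:ℝ)/4) * Real.log y ^ (-(3:ℝ)/4))) := by
    ring
  rw [erhs, e1, e2, e3, one_mul]

def natEmb : ℕ ↪ ℤ := ⟨fun k => (k:ℤ), fun a b h => by simpa using h⟩

lemma natEmb_apply (k : ℕ) : natEmb k = (k:ℤ) := rfl

lemma K_tendsto : Tendsto (fun N : ℕ => Nat.sqrt (Nat.sqrt (N / 2))) atTop atTop := by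
  rw [tendsto_atTop_atTop]
  intro b
  refine ⟨2 * b ^ 4, fun a ha => ?_⟩
  have h1 : b ^ 4 ≤ a / 2 := by
    rw [Nat.le_div_iff_mul_le (by norm_num)]
    omega
  have h2 : b ^ 2 ≤ Nat.sqrt (a / 2) := by
    calc b ^ 2 = Nat.sqrt ((b ^ 2) ^ 2) := (Nat.sqrt_eq' _).symm
      _ ≤ Nat.sqrt (a / 2) := Nat.sqrt_le_sqrt (by calc (b^2)^2 = b^4 := by ring
                                                    _ ≤ a/2 := h1)
  calc b = Nat.sqrt (b ^ 2) := (Nat.sqrt_eq' _).symm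
    _ ≤ Nat.sqrt (Nat.sqrt (a / 2)) := Nat.sqrt_le_sqrt h2

set_option maxHeartbeats 2000000 in
/-- Optimality at the endpoint `s₁ = 2σ/(α−1)`, `2(s₁+s₂) ≤ 1`: the
coefficients `logCoeff` are square-summable, yet
`S_N = ‖⟨D_t⟩^{−s₁} f_N(0,·)‖²_{H^{−s₂}}` diverges. -/
theorem optimality_endpoint
    (α σ s₁ s₂ : ℝ) (hα : 1 < α) (hσ : 0 < σ)
    (hs₁ : s₁ = 2 * σ / (α - 1)) (hs₂ : 2 * (s₁ + s₂) ≤ 1) :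
    Summable (fun n : ℤ => logCoeff n ^ 2) ∧
    Tendsto
      (fun N : ℕ =>
        ∑ n ∈ (Finset.Icc (-(2 * (N : ℤ))) (2 * (N : ℤ))).filter
            (fun n => n ≠ 0),
          jb (n : ℝ) ^ (-(2 * s₂)) *
            (∑ m ∈ (Finset.Icc (-(N : ℤ)) (N : ℤ)).filter
                (fun m => |n + m| ≤ (N : ℤ)),
              jb ((n + m : ℤ) : ℝ) ^ σ * jb ((m : ℤ) : ℝ) ^ σ
                * jb (|((n + m : ℤ) : ℝ)| ^ α - |((m : ℤ) : ℝ)| ^ α) ^ (-s₁)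
                * logCoeff (n + m) * logCoeff m) ^ 2)
      atTop atTop := by
  refine ⟨summable_sq, ?_⟩
  have hα1 : (0:ℝ) < α - 1 := by linarith
  have hs1pos : 0 < s₁ := by rw [hs₁]; positivity
  have hC₂0 : (0:ℝ) < 1 + α * 2 ^ (α-1) := by
    have h2p : (0:ℝ) < (2:ℝ) ^ (α-1) := Real.rpow_pos_of_pos two_pos _
    nlinarith
  set C₃ : ℝ := (1 + α * 2 ^ (α-1)) ^ (-s₁) * 2 ^ (-(5:ℝ)/4) with hC₃def
  have hC₃ : 0 < C₃ := mul_pos (Real.rpow_pos_of_pos hC₂0 _) (Real.rpow_pos_of_pos two_pos _)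
  set c₄ : ℝ := min 1 ((2:ℝ) ^ (-(2 * s₂))) with hc₄def
  have hc₄ : 0 < c₄ := lt_min one_pos (Real.rpow_pos_of_pos two_pos _)
  set c₅ : ℝ := c₄ * C₃ ^ 2 with hc₅def
  have hc₅ : 0 < c₅ := mul_pos hc₄ (pow_pos hC₃ 2)
  set K : ℕ → ℕ := fun N => Nat.sqrt (Nat.sqrt (N / 2)) with hKdef
  have hKt : Tendsto K atTop atTop := K_tendsto
  apply tendsto_atTop_mono' atTop
    (f₁ := fun N => c₅ * (Real.log (Real.log ((K N : ℕ) : ℝ)) - Real.log (Real.log 2)))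
  case h₁ =>
    apply Tendsto.const_mul_atTop hc₅
    have h1 : Tendsto (fun N => Real.log (Real.log ((K N : ℕ) : ℝ))) atTop atTop :=
      Real.tendsto_log_atTop.comp (Real.tendsto_log_atTop.comp
        (tendsto_natCast_atTop_atTop.comp hKt))
    simpa [sub_eq_add_neg] using tendsto_atTop_add_const_right atTop (-(Real.log (Real.log 2))) h1
  -- the eventual bound
  filter_upwards [hKt.eventually_ge_atTop 2] with N hN2
  -- nat arithmetic facts
  have hKN4 : (K N) ^ 4 ≤ N / 2 := by
    have h1 : (K N) ^ 2 ≤ Nat.sqrt (N / 2) := Nat.sqrt_le' _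
    calc (K N) ^ 4 = ((K N) ^ 2) ^ 2 := by ring
      _ ≤ (Nat.sqrt (N / 2)) ^ 2 := Nat.pow_le_pow_left h1 2
      _ ≤ N / 2 := Nat.sqrt_le' _
  have hKN : K N ≤ N := by
    calc K N ≤ Nat.sqrt (N / 2) := Nat.sqrt_le_self _
      _ ≤ N / 2 := Nat.sqrt_le_self _
      _ ≤ N := Nat.div_le_self N 2
  -- outer subset
  have hsub : ((Finset.Ico 2 (K N)).map natEmb) ⊆
      (Finset.Icc (-(2 * (N : ℤ))) (2 * (N : ℤ))).filter (fun n => n ≠ 0) := by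
    intro z hz
    rw [Finset.mem_map] at hz
    obtain ⟨a, ha, rfl⟩ := hz
    rw [Finset.mem_Ico] at ha
    have haN : a ≤ N := le_trans (le_of_lt (lt_of_lt_of_le ha.2 hKN)) le_rfl
    rw [Finset.mem_filter, Finset.mem_Icc, natEmb_apply]
    refine ⟨⟨?_, ?_⟩, ?_⟩
    · omega
    · omega
    · omega
  have houter : ∑ z ∈ (Finset.Ico 2 (K N)).map natEmb,
        (jb (z : ℝ) ^ (-(2 * s₂)) *
          (∑ m ∈ (Finset.Icc (-(N : ℤ)) (N : ℤ)).filter (fun m => |z + m| ≤ (N : ℤ)),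
            jb ((z + m : ℤ) : ℝ) ^ σ * jb ((m : ℤ) : ℝ) ^ σ
              * jb (|((z + m : ℤ) : ℝ)| ^ α - |((m : ℤ) : ℝ)| ^ α) ^ (-s₁)
              * logCoeff (z + m) * logCoeff m) ^ 2)
      ≤ ∑ n ∈ (Finset.Icc (-(2 * (N : ℤ))) (2 * (N : ℤ))).filter (fun n => n ≠ 0),
          jb (n : ℝ) ^ (-(2 * s₂)) *
            (∑ m ∈ (Finset.Icc (-(N : ℤ)) (N : ℤ)).filter (fun m => |n + m| ≤ (N : ℤ)),
              jb ((n + m : ℤ) : ℝ) ^ σ * jb ((m : ℤ) : ℝ) ^ σ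
                * jb (|((n + m : ℤ) : ℝ)| ^ α - |((m : ℤ) : ℝ)| ^ α) ^ (-s₁)
                * logCoeff (n + m) * logCoeff m) ^ 2 := by
    apply Finset.sum_le_sum_of_subset_of_nonneg hsub
    intro i _ _
    exact mul_nonneg (Real.rpow_nonneg (jb_pos _).le _) (sq_nonneg _)
  rw [Finset.sum_map] at houter
  -- per-element bound
  have hbound : ∀ a ∈ Finset.Ico 2 (K N),
      c₅ * (((a:ℕ):ℝ)⁻¹ * (Real.log ((a:ℕ):ℝ))⁻¹)
        ≤ jb ((natEmb a : ℤ) : ℝ) ^ (-(2 * s₂)) *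
          (∑ m ∈ (Finset.Icc (-(N : ℤ)) (N : ℤ)).filter
              (fun m => |(natEmb a : ℤ) + m| ≤ (N : ℤ)),
            jb (((natEmb a : ℤ) + m : ℤ) : ℝ) ^ σ * jb ((m : ℤ) : ℝ) ^ σ
              * jb (|(((natEmb a : ℤ) + m : ℤ) : ℝ)| ^ α - |((m : ℤ) : ℝ)| ^ α) ^ (-s₁)
              * logCoeff ((natEmb a : ℤ) + m) * logCoeff m) ^ 2 := by
    intro a ha
    rw [Finset.mem_Ico] at ha
    obtain ⟨ha2, haK⟩ := ha
    rw [natEmb_apply]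
    set x : ℝ := ((a:ℕ):ℝ) with hxdef
    have hx2 : (2:ℝ) ≤ x := by rw [hxdef]; exact_mod_cast ha2
    have hx0 : (0:ℝ) < x := by linarith
    have hLa : (0:ℝ) < Real.log x := Real.log_pos (by linarith)
    -- nat facts
    have ha4 : a ^ 4 ≤ N / 2 := le_trans (Nat.pow_le_pow_left haK.le 4) hKN4
    have haa4 : a ≤ a ^ 4 := Nat.le_self_pow (by norm_num) a
    have hNd : N / 2 + N / 2 ≤ N := by omega
    have hsumN : a + a ^ 4 ≤ N := by linarith
    have ha4N : a ^ 4 ≤ N := by linarith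
    -- inner subset
    have hsubI : ((Finset.Ico a (a ^ 4)).map natEmb) ⊆
        (Finset.Icc (-(N : ℤ)) (N : ℤ)).filter (fun m => |(a:ℤ) + m| ≤ (N : ℤ)) := by
      intro z hz
      rw [Finset.mem_map] at hz
      obtain ⟨b, hb, rfl⟩ := hz
      rw [Finset.mem_Ico] at hb
      rw [Finset.mem_filter, Finset.mem_Icc, natEmb_apply]
      have h1 : b ≤ N := by omega
      have h2 : a + b ≤ N := by omega
      refine ⟨⟨by omega, by exact_mod_cast h1⟩, ?_⟩
      rw [show (a:ℤ) + (b:ℤ) = ((a+b : ℕ) : ℤ) by push_cast; ring,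
        abs_of_nonneg (by positivity)]
      exact_mod_cast h2
    have hinner1 : ∑ z ∈ (Finset.Ico a (a ^ 4)).map natEmb,
          (jb (((a:ℤ) + z : ℤ) : ℝ) ^ σ * jb ((z : ℤ) : ℝ) ^ σ
            * jb (|(((a:ℤ) + z : ℤ) : ℝ)| ^ α - |((z : ℤ) : ℝ)| ^ α) ^ (-s₁)
            * logCoeff ((a:ℤ) + z) * logCoeff z)
        ≤ ∑ m ∈ (Finset.Icc (-(N : ℤ)) (N : ℤ)).filter
            (fun m => |(a:ℤ) + m| ≤ (N : ℤ)),
          jb (((a:ℤ) + m : ℤ) : ℝ) ^ σ * jb ((m : ℤ) : ℝ) ^ σ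
            * jb (|(((a:ℤ) + m : ℤ) : ℝ)| ^ α - |((m : ℤ) : ℝ)| ^ α) ^ (-s₁)
            * logCoeff ((a:ℤ) + m) * logCoeff m := by
      apply Finset.sum_le_sum_of_subset_of_nonneg hsubI
      intro i _ _
      apply mul_nonneg
      apply mul_nonneg
      apply mul_nonneg
      apply mul_nonneg
      · exact Real.rpow_nonneg (jb_pos _).le _
      · exact Real.rpow_nonneg (jb_pos _).le _
      · exact Real.rpow_nonneg (jb_pos _).le _
      · exact logCoeff_nonneg _
      · exact logCoeff_nonneg _
    rw [Finset.sum_map] at hinner1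
    have hinner2 : ∑ b ∈ Finset.Ico a (a ^ 4),
          (C₃ * x ^ (-s₁) * (((b:ℕ):ℝ)⁻¹ * Real.log ((b:ℕ):ℝ) ^ (-(3:ℝ)/2)))
        ≤ ∑ b ∈ Finset.Ico a (a ^ 4),
          (jb (((a:ℤ) + (natEmb b) : ℤ) : ℝ) ^ σ * jb (((natEmb b) : ℤ) : ℝ) ^ σ
            * jb (|(((a:ℤ) + (natEmb b) : ℤ) : ℝ)| ^ α - |(((natEmb b) : ℤ) : ℝ)| ^ α) ^ (-s₁)
            * logCoeff ((a:ℤ) + (natEmb b)) * logCoeff (natEmb b)) := by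
      apply Finset.sum_le_sum
      intro b hb
      rw [Finset.mem_Ico] at hb
      rw [natEmb_apply]
      have := T_lb α σ s₁ hα hσ hs₁ (n := (a:ℤ)) (m := (b:ℤ))
        (by exact_mod_cast ha2) (by exact_mod_cast hb.1)
      rw [hC₃def, hxdef]
      convert this using 3 <;> push_cast
      · rfl
      all_goals ring
    have hinner3 : C₃ * x ^ (-s₁) * Real.log x ^ (-(1:ℝ)/2)
        ≤ ∑ b ∈ Finset.Ico a (a ^ 4),
          (C₃ * x ^ (-s₁) * (((b:ℕ):ℝ)⁻¹ * Real.log ((b:ℕ):ℝ) ^ (-(3:ℝ)/2))) := by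
      rw [← Finset.mul_sum]
      apply mul_le_mul_of_nonneg_left (inner_tail ha2)
      exact mul_nonneg hC₃.le (Real.rpow_nonneg hx0.le _)
    set B : ℝ := C₃ * x ^ (-s₁) * Real.log x ^ (-(1:ℝ)/2) with hBdef
    have hB0 : 0 ≤ B :=
      mul_nonneg (mul_nonneg hC₃.le (Real.rpow_nonneg hx0.le _)) (Real.rpow_nonneg hLa.le _)
    have hBinner : B ≤ ∑ m ∈ (Finset.Icc (-(N : ℤ)) (N : ℤ)).filter
            (fun m => |(a:ℤ) + m| ≤ (N : ℤ)),
          jb (((a:ℤ) + m : ℤ) : ℝ) ^ σ * jb ((m : ℤ) : ℝ) ^ σ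
            * jb (|(((a:ℤ) + m : ℤ) : ℝ)| ^ α - |((m : ℤ) : ℝ)| ^ α) ^ (-s₁)
            * logCoeff ((a:ℤ) + m) * logCoeff m :=
      le_trans hinner3 (le_trans hinner2 hinner1)
    have hsq : B ^ 2 ≤ (∑ m ∈ (Finset.Icc (-(N : ℤ)) (N : ℤ)).filter
            (fun m => |(a:ℤ) + m| ≤ (N : ℤ)),
          jb (((a:ℤ) + m : ℤ) : ℝ) ^ σ * jb ((m : ℤ) : ℝ) ^ σ
            * jb (|(((a:ℤ) + m : ℤ) : ℝ)| ^ α - |((m : ℤ) : ℝ)| ^ α) ^ (-s₁)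
            * logCoeff ((a:ℤ) + m) * logCoeff m) ^ 2 :=
      pow_le_pow_left₀ hB0 hBinner 2
    -- outer factor
    have hjbb : c₄ * x ^ (-(2 * s₂)) ≤ jb (((a:ℤ)) : ℝ) ^ (-(2 * s₂)) := by
      have hcast : (((a:ℤ)) : ℝ) = x := by rw [hxdef]; push_cast; ring
      rw [hcast]
      rcases le_or_gt 0 (-(2 * s₂)) with h | h
      · have h1 : x ^ (-(2 * s₂)) ≤ jb x ^ (-(2 * s₂)) :=
          Real.rpow_le_rpow (by linarith) (le_jb_s15 (by linarith)) h
        have hc41 : c₄ ≤ 1 := min_le_left _ _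
        nlinarith [Real.rpow_nonneg (show (0:ℝ) ≤ x by linarith) (-(2 * s₂))]
      · have h2x : jb x ≤ 2 * x := jb_le_two_mul (by linarith)
        have h1 : (2 * x) ^ (-(2 * s₂)) ≤ jb x ^ (-(2 * s₂)) :=
          Real.rpow_le_rpow_of_nonpos (jb_pos x) h2x h.le
        rw [Real.mul_rpow (by norm_num) (by linarith)] at h1
        have hc42 : c₄ ≤ (2:ℝ) ^ (-(2 * s₂)) := min_le_right _ _
        nlinarith [Real.rpow_nonneg (show (0:ℝ) ≤ x by linarith) (-(2 * s₂)),
          Real.rpow_pos_of_pos (show (0:ℝ) < 2 by norm_num) (-(2 * s₂))]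
    -- combine
    have hcomb : (c₄ * x ^ (-(2 * s₂))) * B ^ 2
        ≤ jb (((a:ℤ)) : ℝ) ^ (-(2 * s₂)) * (∑ m ∈ (Finset.Icc (-(N : ℤ)) (N : ℤ)).filter
            (fun m => |(a:ℤ) + m| ≤ (N : ℤ)),
          jb (((a:ℤ) + m : ℤ) : ℝ) ^ σ * jb ((m : ℤ) : ℝ) ^ σ
            * jb (|(((a:ℤ) + m : ℤ) : ℝ)| ^ α - |((m : ℤ) : ℝ)| ^ α) ^ (-s₁)
            * logCoeff ((a:ℤ) + m) * logCoeff m) ^ 2 :=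
      mul_le_mul hjbb hsq (sq_nonneg _) (Real.rpow_nonneg (jb_pos _).le _)
    refine le_trans ?_ hcomb
    -- algebra
    have eB : B ^ 2 = C₃ ^ 2 * (x ^ (-s₁) * x ^ (-s₁)) * (Real.log x ^ (-(1:ℝ)/2) * Real.log x ^ (-(1:ℝ)/2)) := by
      rw [hBdef]; ring
    have e1 : x ^ (-s₁) * x ^ (-s₁) = x ^ (-(2 * s₁)) := by
      rw [← Real.rpow_add hx0]; congr 1; ring
    have e2 : Real.log x ^ (-(1:ℝ)/2) * Real.log x ^ (-(1:ℝ)/2) = (Real.log x)⁻¹ := by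
      rw [← Real.rpow_add hLa, show -(1:ℝ)/2 + -(1:ℝ)/2 = (-1:ℝ) by ring, Real.rpow_neg_one]
    have e3 : x ^ (-(2 * s₂)) * x ^ (-(2 * s₁)) = x ^ (-(2 * s₂) + -(2 * s₁)) :=
      (Real.rpow_add hx0 _ _).symm
    have e4 : x ^ (-1:ℝ) ≤ x ^ (-(2 * s₂) + -(2 * s₁)) :=
      Real.rpow_le_rpow_of_exponent_le (by linarith) (by linarith)
    rw [Real.rpow_neg_one] at e4
    calc c₅ * (x⁻¹ * (Real.log x)⁻¹)
        ≤ c₅ * (x ^ (-(2 * s₂) + -(2 * s₁)) * (Real.log x)⁻¹) := by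
          apply mul_le_mul_of_nonneg_left _ hc₅.le
          apply mul_le_mul_of_nonneg_right e4 (by positivity)
      _ = (c₄ * x ^ (-(2 * s₂))) * (C₃ ^ 2 * (x ^ (-(2 * s₁))) * (Real.log x)⁻¹) := by
          rw [hc₅def, ← e3]; ring
      _ = (c₄ * x ^ (-(2 * s₂))) * B ^ 2 := by rw [eB, e1, e2]
  -- final chain
  calc c₅ * (Real.log (Real.log ((K N : ℕ) : ℝ)) - Real.log (Real.log 2))
      ≤ c₅ * ∑ n ∈ Finset.Ico 2 (K N), (((n:ℕ):ℝ)⁻¹ * (Real.log ((n:ℕ):ℝ))⁻¹) := by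
        apply mul_le_mul_of_nonneg_left (outer_tail hN2) hc₅.le
    _ = ∑ n ∈ Finset.Ico 2 (K N), c₅ * (((n:ℕ):ℝ)⁻¹ * (Real.log ((n:ℕ):ℝ))⁻¹) :=
        Finset.mul_sum _ _ _
    _ ≤ ∑ a ∈ Finset.Ico 2 (K N),
          (jb ((natEmb a : ℤ) : ℝ) ^ (-(2 * s₂)) *
            (∑ m ∈ (Finset.Icc (-(N : ℤ)) (N : ℤ)).filter
                (fun m => |(natEmb a : ℤ) + m| ≤ (N : ℤ)),
              jb (((natEmb a : ℤ) + m : ℤ) : ℝ) ^ σ * jb ((m : ℤ) : ℝ) ^ σ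
                * jb (|(((natEmb a : ℤ) + m : ℤ) : ℝ)| ^ α - |((m : ℤ) : ℝ)| ^ α) ^ (-s₁)
                * logCoeff ((natEmb a : ℤ) + m) * logCoeff m) ^ 2) :=
        Finset.sum_le_sum hbound
    _ ≤ _ := houter
end
end
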